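/- arXiv:1301.6804 — 2 statements merged into one kernel-verified Lean document; each statement's English description precedes it below -/
import Mathlib

section
/- If the quantum system 𝕊 is secure with respect to policy ↝, i.e. K(𝕊,↝) = 0, then for each agent a ∈ A there exists a pseudo-distance δ_a on reachable density operators satisfying: (step consistency) δ_a(𝓔_{b,c}(ρ), 𝓔_{b,c}(σ)) ≤ δ_a(ρ,σ) for all b ∈ A, c ∈ C; (observation consistency) d_a(ρ,σ) ≤ δ_a(ρ,σ); and (local respect of ↝) ¬(b ↝ a) implies δ_a(ρ, 𝓔_{b,c}(ρ)) = 0 for all c ∈ C and all reachable ρ. -/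
open scoped Classical ComplexOrder
open Matrix Kronecker

noncomputable section

/-- A density operator: positive semidefinite with trace 1. -/
def IsDensity {d : Type} [Fintype d] [DecidableEq d] (ρ : Matrix d d ℂ) : Prop :=
  ρ.PosSemidef ∧ ρ.trace = 1

/-- A super-operator: a linear, positive, trace-preserving map on matrices. -/
def IsSuperOp {d : Type} [Fintype d] [DecidableEq d]
    (F : Matrix d d ℂ → Matrix d d ℂ) : Prop :=
  IsLinearMap ℂ F ∧ (∀ ρ : Matrix d d ℂ, ρ.PosSemidef → (F ρ).PosSemidef) ∧
    (∀ ρ : Matrix d d ℂ, (F ρ).trace = ρ.trace)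

/-- A finite family of matrices (the data of a measurement). -/
structure PMeas (d : Type) where
  m : ℕ
  E : Fin m → Matrix d d ℂ

/-- The family is a POVM: positive semidefinite elements summing to the identity. -/
def PMeas.IsPOVM {d : Type} [Fintype d] [DecidableEq d] (P : PMeas d) : Prop :=
  (∀ i, (P.E i).PosSemidef) ∧ ∑ i, P.E i = 1

/-- The distance between outcome distributions of a measurement on two states. -/
def dE {d : Type} [Fintype d] (P : PMeas d) (ρ σ : Matrix d d ℂ) : ℝ :=
  (1 / 2) * ∑ i, ‖(P.E i * ρ).trace - (P.E i * σ).trace‖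

/-- The measurement pseudo-distance induced by a set of measurements. -/
def dM {d : Type} [Fintype d] (M : Set (PMeas d)) (ρ σ : Matrix d d ℂ) : ℝ :=
  sSup { x | ∃ P ∈ M, x = dE P ρ σ }

/-- A quantum system: initial state, agents, commands, super-operators, measurements. -/
structure QSystem (Agent Cmd d : Type) where
  ρ0 : Matrix d d ℂ
  A : Set Agent
  C : Set Cmd
  Ecmd : Agent → Cmd → Matrix d d ℂ → Matrix d d ℂ
  M : Agent → Set (PMeas d)

/-- Well-formedness: the initial state is a density operator, commands act as
super-operators, and agents measure with POVMs. -/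
def QSystem.WellFormed {Agent Cmd d : Type} [Fintype d] [DecidableEq d]
    (S : QSystem Agent Cmd d) : Prop :=
  IsDensity S.ρ0 ∧ (∀ a ∈ S.A, ∀ c ∈ S.C, IsSuperOp (S.Ecmd a c)) ∧
    (∀ a ∈ S.A, ∀ P ∈ S.M a, P.IsPOVM)

/-- Execution of a finite action sequence (composition of super-operators, in order). -/
def QSystem.run {Agent Cmd d : Type} (S : QSystem Agent Cmd d)
    (α : List (Agent × Cmd)) (ρ : Matrix d d ℂ) : Matrix d d ℂ :=
  α.foldl (fun τ p => S.Ecmd p.1 p.2 τ) ρ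

/-- A sequence over A × C. -/
def QSystem.Valid {Agent Cmd d : Type} (S : QSystem Agent Cmd d)
    (α : List (Agent × Cmd)) : Prop :=
  ∀ p ∈ α, p.1 ∈ S.A ∧ p.2 ∈ S.C

/-- `purge G D α` deletes from `α` every pair `(a, c)` with `a ∈ G` and `c ∈ D`. -/
def purge {Agent Cmd : Type} (G : Set Agent) (D : Set Cmd) :
    List (Agent × Cmd) → List (Agent × Cmd)
  | [] => []
  | p :: rest => if p.1 ∈ G ∧ p.2 ∈ D then purge G D rest else p :: purge G D rest

/-- A reachable density operator. -/
def QSystem.Reachable {Agent Cmd d : Type} (S : QSystem Agent Cmd d)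
    (ρ : Matrix d d ℂ) : Prop :=
  ∃ α, S.Valid α ∧ S.run α S.ρ0 = ρ

/-- `∇ a`: the set of agents from which information may not flow to `a`. -/
def nabla {Agent : Type} (pol : Agent → Agent → Prop) (a : Agent) : Set Agent :=
  { b | ¬ pol b a }

/-- The security degree `K(𝕊,↝)`. -/
def Kdeg {Agent Cmd d : Type} [Fintype d] (S : QSystem Agent Cmd d)
    (pol : Agent → Agent → Prop) : ℝ :=
  sSup { x | ∃ a ∈ S.A, ∃ α, S.Valid α ∧
    x = dM (S.M a) (S.run α S.ρ0) (S.run (purge (nabla pol a) Set.univ α) S.ρ0) }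

/-- The `t`-bounded security degree `K_t(𝕊,↝)`. -/
def Kt {Agent Cmd d : Type} [Fintype d] (S : QSystem Agent Cmd d)
    (pol : Agent → Agent → Prop) (t : ℕ) : ℝ :=
  sSup { x | ∃ a ∈ S.A, ∃ α, S.Valid α ∧ α.length ≤ t ∧
    x = dM (S.M a) (S.run α S.ρ0) (S.run (purge (nabla pol a) Set.univ α) S.ρ0) }

/-- The interference degree `Int(G₁, D | G₂)`. -/
def IntDeg {Agent Cmd d : Type} [Fintype d] (S : QSystem Agent Cmd d)
    (G1 : Set Agent) (D : Set Cmd) (G2 : Set Agent) : ℝ :=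
  sSup { x | ∃ a ∈ G2, ∃ α, S.Valid α ∧
    x = dM (S.M a) (S.run α S.ρ0) (S.run (purge G1 D α) S.ρ0) }

/-- Trace distance `d(ρ,σ) = (1/2)·tr √((ρ−σ)†(ρ−σ))`. -/
def traceDist {d : Type} [Fintype d] [DecidableEq d] (ρ σ : Matrix d d ℂ) : ℝ :=
  (1 / 2) * (((Matrix.posSemidef_conjTranspose_mul_self (ρ - σ)).1.eigenvectorUnitary.1 *
    diagonal (((↑) : ℝ → ℂ) ∘ Real.sqrt ∘ (Matrix.posSemidef_conjTranspose_mul_self (ρ - σ)).1.eigenvalues) *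
    (star (Matrix.posSemidef_conjTranspose_mul_self (ρ - σ)).1.eigenvectorUnitary : Matrix d d ℂ)).trace).re

end
noncomputable section

section Aux

variable {d : Type} [Fintype d] [DecidableEq d]

lemma psd_diag_nonneg {M : Matrix d d ℂ} (hM : M.PosSemidef) (i : d) : 0 ≤ M i i := by
  exact hM.diag_nonneg

lemma psd_trace_nonneg {M : Matrix d d ℂ} (hM : M.PosSemidef) : 0 ≤ M.trace :=
  Finset.sum_nonneg fun i _ => psd_diag_nonneg hM i

lemma trace_mul_psd_nonneg {E ρ : Matrix d d ℂ} (hE : E.PosSemidef) (hρ : ρ.PosSemidef) :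
    0 ≤ (E * ρ).trace := by
  obtain ⟨B, rfl⟩ : ∃ B : Matrix d d ℂ, ρ = Bᴴ * B := by
    open MatrixOrder in exact CStarAlgebra.nonneg_iff_eq_star_mul_self.mp hρ.nonneg
  rw [← Matrix.mul_assoc, Matrix.trace_mul_cycle]
  exact psd_trace_nonneg (hE.mul_mul_conjTranspose_same B)

lemma cabs_sub_le_re_add {x y : ℂ} (hx : 0 ≤ x) (hy : 0 ≤ y) :
    ‖x - y‖ ≤ (x + y).re := by
  obtain ⟨hxr, hxi⟩ := Complex.nonneg_iff.mp hx
  obtain ⟨hyr, hyi⟩ := Complex.nonneg_iff.mp hy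
  have hxy : x - y = ((x.re - y.re : ℝ) : ℂ) := by
    apply Complex.ext <;> simp [← hxi, ← hyi]
  rw [hxy, Complex.norm_real, Real.norm_eq_abs, Complex.add_re]
  calc |x.re - y.re| ≤ |x.re| + |y.re| := abs_sub _ _
    _ = x.re + y.re := by rw [abs_of_nonneg hxr, abs_of_nonneg hyr]

lemma dE_nonneg (P : PMeas d) (ρ σ : Matrix d d ℂ) : 0 ≤ dE P ρ σ := by
  unfold dE
  refine mul_nonneg (by norm_num) (Finset.sum_nonneg fun i _ => ?_)
  exact norm_nonneg _

lemma dE_self (P : PMeas d) (ρ : Matrix d d ℂ) : dE P ρ ρ = 0 := by simp [dE]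

lemma dE_symm (P : PMeas d) (ρ σ : Matrix d d ℂ) : dE P ρ σ = dE P σ ρ := by
  unfold dE
  congr 1
  refine Finset.sum_congr rfl fun i _ => ?_
  rw [show (P.E i * ρ).trace - (P.E i * σ).trace
      = -((P.E i * σ).trace - (P.E i * ρ).trace) by ring, norm_neg]

lemma dE_triangle (P : PMeas d) (ρ σ τ : Matrix d d ℂ) :
    dE P ρ τ ≤ dE P ρ σ + dE P σ τ := by
  unfold dE
  rw [← mul_add, ← Finset.sum_add_distrib]
  refine mul_le_mul_of_nonneg_left (Finset.sum_le_sum fun i _ => ?_) (by norm_num)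
  calc ‖(P.E i * ρ).trace - (P.E i * τ).trace‖
      = ‖((P.E i * ρ).trace - (P.E i * σ).trace)
        + ((P.E i * σ).trace - (P.E i * τ).trace)‖ := by ring_nf
    _ ≤ _ := norm_add_le _ _

lemma dE_le_one {P : PMeas d} (hP : P.IsPOVM) {ρ σ : Matrix d d ℂ}
    (hρ : IsDensity ρ) (hσ : IsDensity σ) : dE P ρ σ ≤ 1 := by
  have hsum : ∀ M : Matrix d d ℂ, ∑ i, (P.E i * M).trace = M.trace := by
    intro M
    rw [← Matrix.trace_sum]
    rw [show ∑ i, P.E i * M = (∑ i, P.E i) * M from (Finset.sum_mul ..).symm, hP.2,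
      Matrix.one_mul]
  have hb : ∑ i, ‖(P.E i * ρ).trace - (P.E i * σ).trace‖
      ≤ ∑ i, ((P.E i * ρ).trace + (P.E i * σ).trace).re :=
    Finset.sum_le_sum fun i _ => cabs_sub_le_re_add
      (trace_mul_psd_nonneg (hP.1 i) hρ.1) (trace_mul_psd_nonneg (hP.1 i) hσ.1)
  have h2 : ∑ i, ((P.E i * ρ).trace + (P.E i * σ).trace).re = 2 := by
    rw [← Complex.re_sum, Finset.sum_add_distrib, hsum ρ, hsum σ, hρ.2, hσ.2]
    norm_num
  unfold dE
  rw [h2] at hb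
  linarith

lemma dM_nonneg (M : Set (PMeas d)) (ρ σ : Matrix d d ℂ) : 0 ≤ dM M ρ σ :=
  Real.sSup_nonneg (by rintro x ⟨P, _, rfl⟩; exact dE_nonneg P ρ σ)

lemma dM_self (M : Set (PMeas d)) (ρ : Matrix d d ℂ) : dM M ρ ρ = 0 :=
  le_antisymm (Real.sSup_le (by rintro x ⟨P, _, rfl⟩; rw [dE_self]) le_rfl)
    (dM_nonneg M ρ ρ)

lemma dM_symm (M : Set (PMeas d)) (ρ σ : Matrix d d ℂ) : dM M ρ σ = dM M σ ρ := by
  unfold dM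
  congr 1
  ext x
  exact ⟨fun ⟨P, h, e⟩ => ⟨P, h, e.trans (dE_symm P ρ σ)⟩,
    fun ⟨P, h, e⟩ => ⟨P, h, e.trans (dE_symm P σ ρ)⟩⟩

lemma dM_bddAbove {M : Set (PMeas d)} (hM : ∀ P ∈ M, P.IsPOVM) {ρ σ : Matrix d d ℂ}
    (hρ : IsDensity ρ) (hσ : IsDensity σ) :
    BddAbove { x | ∃ P ∈ M, x = dE P ρ σ } := by
  refine ⟨1, ?_⟩
  rintro x ⟨P, hP, rfl⟩
  exact dE_le_one (hM P hP) hρ hσ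

lemma dM_le_one {M : Set (PMeas d)} (hM : ∀ P ∈ M, P.IsPOVM) {ρ σ : Matrix d d ℂ}
    (hρ : IsDensity ρ) (hσ : IsDensity σ) : dM M ρ σ ≤ 1 := by
  refine Real.sSup_le ?_ zero_le_one
  rintro x ⟨P, hP, rfl⟩
  exact dE_le_one (hM P hP) hρ hσ

lemma dM_triangle {M : Set (PMeas d)} (hM : ∀ P ∈ M, P.IsPOVM) {ρ σ τ : Matrix d d ℂ}
    (hρ : IsDensity ρ) (hσ : IsDensity σ) (hτ : IsDensity τ) :
    dM M ρ τ ≤ dM M ρ σ + dM M σ τ := by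
  refine Real.sSup_le ?_ (add_nonneg (dM_nonneg M ρ σ) (dM_nonneg M σ τ))
  rintro x ⟨P, hP, rfl⟩
  calc dE P ρ τ ≤ dE P ρ σ + dE P σ τ := dE_triangle P ρ σ τ
    _ ≤ dM M ρ σ + dM M σ τ :=
      add_le_add (le_csSup (dM_bddAbove hM hρ hσ) ⟨P, hP, rfl⟩)
        (le_csSup (dM_bddAbove hM hσ hτ) ⟨P, hP, rfl⟩)

variable {Agent Cmd : Type}

lemma run_append (S : QSystem Agent Cmd d) (α β : List (Agent × Cmd)) (ρ : Matrix d d ℂ) :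
    S.run (α ++ β) ρ = S.run β (S.run α ρ) := by
  simp [QSystem.run, List.foldl_append]

lemma valid_append {S : QSystem Agent Cmd d} {α β : List (Agent × Cmd)}
    (hα : S.Valid α) (hβ : S.Valid β) : S.Valid (α ++ β) := by
  intro p hp
  rcases List.mem_append.mp hp with h | h
  · exact hα p h
  · exact hβ p h

lemma run_density {S : QSystem Agent Cmd d} (hS : S.WellFormed) :
    ∀ {α : List (Agent × Cmd)}, S.Valid α → ∀ {ρ : Matrix d d ℂ}, IsDensity ρ →
      IsDensity (S.run α ρ) := by
  intro α
  induction α with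
  | nil => intro _ ρ hρ; exact hρ
  | cons p α ih =>
    intro hα ρ hρ
    have hp := hα p List.mem_cons_self
    have hop := hS.2.1 p.1 hp.1 p.2 hp.2
    have hρ' : IsDensity (S.Ecmd p.1 p.2 ρ) :=
      ⟨hop.2.1 ρ hρ.1, (hop.2.2 ρ).trans hρ.2⟩
    exact ih (fun q hq => hα q (List.mem_cons_of_mem p hq)) hρ'

lemma mem_purge {G : Set Agent} {D : Set Cmd} {α : List (Agent × Cmd)}
    {p : Agent × Cmd} (h : p ∈ purge G D α) : p ∈ α := by
  induction α with
  | nil => simpa [purge] using h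
  | cons q α ih =>
    by_cases hq : q.1 ∈ G ∧ q.2 ∈ D
    · simp only [purge, if_pos hq] at h
      exact List.mem_cons_of_mem q (ih h)
    · simp only [purge, if_neg hq] at h
      rcases List.mem_cons.mp h with h | h
      · exact h ▸ List.mem_cons_self
      · exact List.mem_cons_of_mem q (ih h)

lemma valid_purge {S : QSystem Agent Cmd d} {G : Set Agent} {D : Set Cmd}
    {α : List (Agent × Cmd)} (hα : S.Valid α) : S.Valid (purge G D α) :=
  fun p hp => hα p (mem_purge hp)

lemma purge_append (G : Set Agent) (D : Set Cmd) (α β : List (Agent × Cmd)) :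
    purge G D (α ++ β) = purge G D α ++ purge G D β := by
  induction α with
  | nil => rfl
  | cons p α ih =>
    by_cases h : p.1 ∈ G ∧ p.2 ∈ D <;>
      simp [purge, h, ih]

lemma Kdeg_bddAbove [Nonempty d] {S : QSystem Agent Cmd d} (hS : S.WellFormed)
    (pol : Agent → Agent → Prop) :
    BddAbove { x | ∃ a ∈ S.A, ∃ α, S.Valid α ∧
      x = dM (S.M a) (S.run α S.ρ0) (S.run (purge (nabla pol a) Set.univ α) S.ρ0) } := by
  refine ⟨1, ?_⟩
  rintro x ⟨a, ha, α, hα, rfl⟩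
  exact dM_le_one (hS.2.2 a ha) (run_density hS hα hS.1)
    (run_density hS (valid_purge hα) hS.1)

lemma le_Kdeg [Nonempty d] {S : QSystem Agent Cmd d} (hS : S.WellFormed)
    (pol : Agent → Agent → Prop) {a : Agent} (ha : a ∈ S.A)
    {α : List (Agent × Cmd)} (hα : S.Valid α) :
    dM (S.M a) (S.run α S.ρ0) (S.run (purge (nabla pol a) Set.univ α) S.ρ0)
      ≤ Kdeg S pol :=
  le_csSup (Kdeg_bddAbove hS pol) ⟨a, ha, α, hα, rfl⟩

end Aux

/-- If `K(𝕊,↝) = 0`, then there is a family of pseudo-distances on reachable density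
operators satisfying step consistency, observation consistency, and local respect of
the policy. -/
theorem secure_implies_pseudo_distances {Agent Cmd d : Type}
    [Fintype d] [DecidableEq d] [Nonempty d]
    (S : QSystem Agent Cmd d) (hS : S.WellFormed)
    (pol : Agent → Agent → Prop) (hpol : ∀ a ∈ S.A, pol a a)
    (hsec : Kdeg S pol = 0) :
    ∃ δ : Agent → Matrix d d ℂ → Matrix d d ℂ → ℝ,
      (∀ a ∈ S.A, ∀ ρ σ, S.Reachable ρ → S.Reachable σ → 0 ≤ δ a ρ σ) ∧
      (∀ a ∈ S.A, ∀ ρ, S.Reachable ρ → δ a ρ ρ = 0) ∧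
      (∀ a ∈ S.A, ∀ ρ σ, S.Reachable ρ → S.Reachable σ → δ a ρ σ = δ a σ ρ) ∧
      (∀ a ∈ S.A, ∀ ρ σ τ, S.Reachable ρ → S.Reachable σ → S.Reachable τ →
        δ a ρ τ ≤ δ a ρ σ + δ a σ τ) ∧
      (∀ a ∈ S.A, ∀ b ∈ S.A, ∀ c ∈ S.C, ∀ ρ σ, S.Reachable ρ → S.Reachable σ →
        δ a (S.Ecmd b c ρ) (S.Ecmd b c σ) ≤ δ a ρ σ) ∧
      (∀ a ∈ S.A, ∀ ρ σ, S.Reachable ρ → S.Reachable σ → dM (S.M a) ρ σ ≤ δ a ρ σ) ∧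
      (∀ a ∈ S.A, ∀ b ∈ S.A, ¬ pol b a → ∀ c ∈ S.C, ∀ ρ, S.Reachable ρ →
        δ a ρ (S.Ecmd b c ρ) = 0) := by
  classical
  have hdens : ∀ {ρ : Matrix d d ℂ}, S.Reachable ρ → IsDensity ρ := by
    rintro ρ ⟨α, hα, rfl⟩
    exact run_density hS hα hS.1
  have hbdd : ∀ a ∈ S.A, ∀ {ρ σ : Matrix d d ℂ}, IsDensity ρ → IsDensity σ →
      BddAbove { x | ∃ β, S.Valid β ∧ x = dM (S.M a) (S.run β ρ) (S.run β σ) } := by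
    intro a ha ρ σ hρ hσ
    refine ⟨1, ?_⟩
    rintro x ⟨β, hβ, rfl⟩
    exact dM_le_one (hS.2.2 a ha) (run_density hS hβ hρ) (run_density hS hβ hσ)
  have hnonneg : ∀ (a : Agent) (ρ σ : Matrix d d ℂ),
      0 ≤ sSup { x | ∃ β, S.Valid β ∧ x = dM (S.M a) (S.run β ρ) (S.run β σ) } := by
    intro a ρ σ
    refine Real.sSup_nonneg ?_
    rintro x ⟨β, hβ, rfl⟩
    exact dM_nonneg _ _ _
  refine ⟨fun a ρ σ => sSup { x | ∃ β, S.Valid β ∧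
      x = dM (S.M a) (S.run β ρ) (S.run β σ) }, ?_, ?_, ?_, ?_, ?_, ?_, ?_⟩
  · intro a _ ρ σ _ _
    exact hnonneg a ρ σ
  · intro a _ ρ _
    refine le_antisymm (Real.sSup_le ?_ le_rfl) (hnonneg a ρ ρ)
    rintro x ⟨β, hβ, rfl⟩
    rw [dM_self]
  · intro a _ ρ σ _ _
    refine congrArg sSup (Set.ext fun x => ?_)
    exact ⟨fun ⟨β, hβ, e⟩ => ⟨β, hβ, e.trans (dM_symm _ _ _)⟩,
      fun ⟨β, hβ, e⟩ => ⟨β, hβ, e.trans (dM_symm _ _ _)⟩⟩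
  · intro a ha ρ σ τ hρ hσ hτ
    refine Real.sSup_le ?_ (add_nonneg (hnonneg a ρ σ) (hnonneg a σ τ))
    rintro x ⟨β, hβ, rfl⟩
    calc dM (S.M a) (S.run β ρ) (S.run β τ)
        ≤ dM (S.M a) (S.run β ρ) (S.run β σ) + dM (S.M a) (S.run β σ) (S.run β τ) :=
          dM_triangle (hS.2.2 a ha) (run_density hS hβ (hdens hρ))
            (run_density hS hβ (hdens hσ)) (run_density hS hβ (hdens hτ))
      _ ≤ _ := add_le_add
          (le_csSup (hbdd a ha (hdens hρ) (hdens hσ)) ⟨β, hβ, rfl⟩)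
          (le_csSup (hbdd a ha (hdens hσ) (hdens hτ)) ⟨β, hβ, rfl⟩)
  · intro a ha b hb c hc ρ σ hρ hσ
    refine Real.sSup_le ?_ (hnonneg a ρ σ)
    rintro x ⟨β, hβ, rfl⟩
    refine le_csSup (hbdd a ha (hdens hρ) (hdens hσ)) ⟨(b, c) :: β, ?_, rfl⟩
    intro p hp
    rcases List.mem_cons.mp hp with rfl | h
    · exact ⟨hb, hc⟩
    · exact hβ p h
  · intro a ha ρ σ hρ hσ
    exact le_csSup (hbdd a ha (hdens hρ) (hdens hσ))
      ⟨[], fun p hp => absurd hp List.not_mem_nil, rfl⟩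
  · rintro a ha b hb hba c hc ρ ⟨α, hα, rfl⟩
    have key : ∀ x ∈ { x | ∃ β, S.Valid β ∧
        x = dM (S.M a) (S.run β (S.run α S.ρ0))
          (S.run β (S.Ecmd b c (S.run α S.ρ0))) }, x = 0 := by
      rintro x ⟨β, hβ, rfl⟩
      have e1 : S.run β (S.run α S.ρ0) = S.run (α ++ β) S.ρ0 :=
        (run_append S α β S.ρ0).symm
      have e2 : S.run β (S.Ecmd b c (S.run α S.ρ0))
          = S.run (α ++ (b, c) :: β) S.ρ0 := by
        rw [run_append]
        rfl
      have hv1 : S.Valid (α ++ β) := valid_append hα hβ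
      have hv2 : S.Valid (α ++ (b, c) :: β) := by
        refine valid_append hα ?_
        intro p hp
        rcases List.mem_cons.mp hp with rfl | h
        · exact ⟨hb, hc⟩
        · exact hβ p h
      have hpurge : purge (nabla pol a) Set.univ (α ++ (b, c) :: β)
          = purge (nabla pol a) Set.univ (α ++ β) := by
        rw [purge_append, purge_append]
        congr 1
        have hmem : ((b, c) : Agent × Cmd).1 ∈ nabla pol a ∧
            ((b, c) : Agent × Cmd).2 ∈ (Set.univ : Set Cmd) := ⟨hba, Set.mem_univ _⟩
        simp [purge, hmem]
      have h1 : dM (S.M a) (S.run (α ++ (b, c) :: β) S.ρ0)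
          (S.run (purge (nabla pol a) Set.univ (α ++ β)) S.ρ0) ≤ 0 := by
        have h := le_Kdeg hS pol ha hv2
        rw [hpurge, hsec] at h
        exact h
      have h2 : dM (S.M a) (S.run (α ++ β) S.ρ0)
          (S.run (purge (nabla pol a) Set.univ (α ++ β)) S.ρ0) ≤ 0 := by
        have h := le_Kdeg hS pol ha hv1
        rwa [hsec] at h
      have htri : dM (S.M a) (S.run (α ++ β) S.ρ0) (S.run (α ++ (b, c) :: β) S.ρ0)
          ≤ dM (S.M a) (S.run (α ++ β) S.ρ0)
              (S.run (purge (nabla pol a) Set.univ (α ++ β)) S.ρ0)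
            + dM (S.M a) (S.run (purge (nabla pol a) Set.univ (α ++ β)) S.ρ0)
              (S.run (α ++ (b, c) :: β) S.ρ0) :=
        dM_triangle (hS.2.2 a ha) (run_density hS hv1 hS.1)
          (run_density hS (valid_purge hv1) hS.1) (run_density hS hv2 hS.1)
      have h3 : dM (S.M a) (S.run (purge (nabla pol a) Set.univ (α ++ β)) S.ρ0)
          (S.run (α ++ (b, c) :: β) S.ρ0) ≤ 0 := by
        rw [dM_symm]
        exact h1
      have hle : dM (S.M a) (S.run (α ++ β) S.ρ0)
          (S.run (α ++ (b, c) :: β) S.ρ0) ≤ 0 := by linarith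
      rw [e1, e2]
      exact le_antisymm hle (dM_nonneg _ _ _)
    refine le_antisymm (Real.sSup_le (fun x hx => le_of_eq (key x hx)) le_rfl)
      (hnonneg a _ _)

end
end

section
/- (Security of quantum access control) Let 𝕊 be a quantum system with structured states over a finite set N of locations, let ↝ be a policy, let (read, alter) be an access control matrix satisfying ↝, let θ, ε ≥ 0, and let t ≥ 0 be a natural number. Suppose the Reference Monitor Assumptions hold: for all agents a ∈ A, commands c ∈ C, reachable density operators ρ, σ, and all K ⊆ N, (RM1) d_a(ρ,σ) ≤ δ_a(ρ,σ) + θ; (RM2) if Dis(ρ, 𝓔_{a,c}(ρ) | ε, K) or Dis(σ, 𝓔_{a,c}(σ) | ε, K), then ¬Dis(𝓔_{a,c}(ρ), 𝓔_{a,c}(σ) | δ_a(ρ,σ), K); (RM3) if Dis(ρ, 𝓔_{a,c}(ρ) | ε, K) then there exists L ∈ alter(a) with K ∩ L ≠ ∅. Then K_t(𝕊, ↝) ≤ θ + 2tε. -/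
open scoped Classical ComplexOrder
open Matrix Kronecker

noncomputable section

variable {N : Type} [Fintype N] [DecidableEq N] {ι : N → Type}
  [∀ n, Fintype (ι n)] [∀ n, DecidableEq (ι n)]

/-- Glue an assignment on `K` and an assignment on `Kᶜ` into a global assignment. -/
def glue (K : Finset N) (u : (n : K) → ι n.1) (w : (n : (Kᶜ : Finset N)) → ι n.1) :
    (n : N) → ι n :=
  fun n => if h : n ∈ K then u ⟨n, h⟩ else w ⟨n, Finset.mem_compl.mpr h⟩

/-- Partial trace `tr_{N∖K}`: trace out the locations outside `K`. -/
def ptrOut (K : Finset N) (ρ : Matrix ((n : N) → ι n) ((n : N) → ι n) ℂ) :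
    Matrix ((n : K) → ι n.1) ((n : K) → ι n.1) ℂ :=
  Matrix.of fun u v =>
    ∑ w : (n : (Kᶜ : Finset N)) → ι n.1, ρ (glue K u w) (glue K v w)

/-- A below-closed family of sets of locations. -/
def BelowClosed {N : Type} (B : Set (Finset N)) : Prop :=
  ∀ K ∈ B, ∀ L ⊆ K, L ∈ B

/-- The pseudo-distance `δ_a(ρ,σ) = sup_{K ∈ read(a)} d(tr_{N∖K}(ρ), tr_{N∖K}(σ))`. -/
def deltaRead {Agent : Type} (read : Agent → Set (Finset N)) (a : Agent)
    (ρ σ : Matrix ((n : N) → ι n) ((n : N) → ι n) ℂ) : ℝ :=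
  sSup { x | ∃ K ∈ read a, x = traceDist (ptrOut K ρ) (ptrOut K σ) }

/-- `Dis(ρ,σ | ε, K)`: `ρ` and `σ` are `ε`-discriminable on `K`. -/
def Dis (K : Finset N) (ε : ℝ)
    (ρ σ : Matrix ((n : N) → ι n) ((n : N) → ι n) ℂ) : Prop :=
  traceDist (ptrOut K ρ) (ptrOut K σ) > ε

/-- The access control matrix `(read, alter)` satisfies the policy `↝`. -/
def ACMSatisfies {Agent N : Type} (A : Set Agent) (pol : Agent → Agent → Prop)
    (read alter : Agent → Set (Finset N)) : Prop :=
  (∀ a ∈ A, ∀ b ∈ A, pol a b → read a ⊆ read b) ∧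
  (∀ a ∈ A, ∀ b ∈ A, (∃ K ∈ read a, ∃ L ∈ alter b, (K ∩ L).Nonempty) → pol b a)

end
noncomputable section AuxLemmas

namespace QACAux

open Matrix

variable {n : Type} [Fintype n] [DecidableEq n]

/-- The trace norm `tr √(M†M)`. -/
def tnorm (M : Matrix n n ℂ) : ℝ :=
  (((Matrix.posSemidef_conjTranspose_mul_self M).1.eigenvectorUnitary.1 *
    diagonal (((↑) : ℝ → ℂ) ∘ Real.sqrt ∘ (Matrix.posSemidef_conjTranspose_mul_self M).1.eigenvalues) *
    (star (Matrix.posSemidef_conjTranspose_mul_self M).1.eigenvectorUnitary :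
      Matrix n n ℂ)).trace).re

lemma tnorm_eq_cfc (M : Matrix n n ℂ) : tnorm M = ((cfc Real.sqrt (Mᴴ * M)).trace).re := by
  rw [tnorm, (Matrix.posSemidef_conjTranspose_mul_self M).1.cfc_eq, IsHermitian.cfc,
    Unitary.conjStarAlgAut_apply]
  rfl

lemma tnorm_zero : tnorm (0 : Matrix n n ℂ) = 0 := by
  rw [tnorm_eq_cfc]
  simp

lemma tnorm_neg (M : Matrix n n ℂ) : tnorm (-M) = tnorm M := by
  rw [tnorm_eq_cfc, tnorm_eq_cfc]
  simp

lemma tnorm_eq_sum_abs_eigenvalues {M : Matrix n n ℂ} (hM : M.IsHermitian) :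
    tnorm M = ∑ i, |hM.eigenvalues i| := by
  rw [tnorm_eq_cfc, hM.eq]
  have hMM : M * M = cfc (fun x : ℝ => x * x) M := by
    rw [cfc_mul (fun x : ℝ => x) (fun x : ℝ => x) M, cfc_id' ℝ M]
  have h : cfc Real.sqrt (M * M) = cfc (fun x : ℝ => |x|) M := by
    rw [hMM, ← cfc_comp Real.sqrt (fun x : ℝ => x * x) M]
    congr 1
    funext x
    exact Real.sqrt_mul_self_eq_abs x
  rw [h, hM.cfc_eq, IsHermitian.cfc, Unitary.conjStarAlgAut_apply, Matrix.trace_mul_comm,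
    ← Matrix.mul_assoc, Unitary.coe_star_mul_self, Matrix.one_mul, Matrix.trace_diagonal]
  simp [Complex.ofReal_re]

lemma exists_unitary_trace_eq {M : Matrix n n ℂ} (hM : M.IsHermitian) :
    ∃ S : Matrix n n ℂ, Sᴴ * S = 1 ∧ S * Sᴴ = 1 ∧
      ((S * M).trace).re = ∑ i, |hM.eigenvalues i| := by
  set U := (hM.eigenvectorUnitary : Matrix n n ℂ) with hU
  have hUU : Uᴴ * U = 1 := by
    rw [← Matrix.star_eq_conjTranspose]; exact Unitary.coe_star_mul_self _
  have hUU' : U * Uᴴ = 1 := by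
    rw [← Matrix.star_eq_conjTranspose]; exact Unitary.coe_mul_star_self _
  set s : n → ℂ := fun i => (if 0 ≤ hM.eigenvalues i then (1:ℝ) else -1 : ℝ) with hs
  have hss : ∀ i, star (s i) * s i = 1 := fun i => by
    by_cases h : 0 ≤ hM.eigenvalues i <;> simp [hs, h]
  have hss' : ∀ i, s i * star (s i) = 1 := fun i => by rw [mul_comm]; exact hss i
  have hd1 : (diagonal s)ᴴ * diagonal s = 1 := by
    rw [Matrix.diagonal_conjTranspose, diagonal_mul_diagonal,
      show (fun i => star s i * s i) = fun _ => (1:ℂ) from funext fun i => hss i,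
      Matrix.diagonal_one]
  have hd2 : diagonal s * (diagonal s)ᴴ = 1 := by
    rw [Matrix.diagonal_conjTranspose, diagonal_mul_diagonal,
      show (fun i => s i * star s i) = fun _ => (1:ℂ) from funext fun i => hss' i,
      Matrix.diagonal_one]
  refine ⟨U * diagonal s * Uᴴ, ?_, ?_, ?_⟩
  · calc (U * diagonal s * Uᴴ)ᴴ * (U * diagonal s * Uᴴ)
        = U * ((diagonal s)ᴴ * (Uᴴ * U) * diagonal s) * Uᴴ := by
          simp only [Matrix.conjTranspose_mul, Matrix.conjTranspose_conjTranspose,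
            Matrix.mul_assoc]
    _ = 1 := by rw [hUU, Matrix.mul_one, hd1, Matrix.mul_one, hUU']
  · calc (U * diagonal s * Uᴴ) * (U * diagonal s * Uᴴ)ᴴ
        = U * (diagonal s * (Uᴴ * U) * (diagonal s)ᴴ) * Uᴴ := by
          simp only [Matrix.conjTranspose_mul, Matrix.conjTranspose_conjTranspose,
            Matrix.mul_assoc]
    _ = 1 := by rw [hUU, Matrix.mul_one, hd2, Matrix.mul_one, hUU']
  · have hM2 : M = U * diagonal (RCLike.ofReal ∘ hM.eigenvalues) * Uᴴ := by
      rw [hU, ← Matrix.star_eq_conjTranspose]; exact hM.spectral_theorem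
    conv_lhs => rw [hM2]
    have heq : U * diagonal s * Uᴴ * (U * diagonal (RCLike.ofReal ∘ hM.eigenvalues) * Uᴴ)
        = U * (diagonal fun i => s i * (RCLike.ofReal ∘ hM.eigenvalues) i) * Uᴴ := by
      calc U * diagonal s * Uᴴ * (U * diagonal (RCLike.ofReal ∘ hM.eigenvalues) * Uᴴ)
          = U * (diagonal s * (Uᴴ * U) * diagonal (RCLike.ofReal ∘ hM.eigenvalues)) * Uᴴ := by
            simp only [Matrix.mul_assoc]
        _ = _ := by rw [hUU, Matrix.mul_one, diagonal_mul_diagonal]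
    rw [heq, Matrix.trace_mul_comm, ← Matrix.mul_assoc, hUU,
      Matrix.one_mul, Matrix.trace_diagonal, Complex.re_sum]
    congr 1; ext i
    show (s i * ((hM.eigenvalues i : ℝ) : ℂ)).re = |hM.eigenvalues i|
    rw [hs]
    by_cases h : 0 ≤ hM.eigenvalues i
    · simp only [h, if_true]; push_cast; simp [abs_of_nonneg h]
    · simp only [h, if_false]; push_cast; simp [abs_of_neg (lt_of_not_ge h)]

lemma re_trace_le_sum_abs {M : Matrix n n ℂ} (hM : M.IsHermitian)
    (S : Matrix n n ℂ) (hS2 : S * Sᴴ = 1) :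
    ((S * M).trace).re ≤ ∑ i, |hM.eigenvalues i| := by
  set U := (hM.eigenvectorUnitary : Matrix n n ℂ) with hU
  have hUU : Uᴴ * U = 1 := by
    rw [← Matrix.star_eq_conjTranspose]; exact Unitary.coe_star_mul_self _
  have hUU' : U * Uᴴ = 1 := by
    rw [← Matrix.star_eq_conjTranspose]; exact Unitary.coe_mul_star_self _
  have hM2 : M = U * diagonal (RCLike.ofReal ∘ hM.eigenvalues) * Uᴴ := by
    rw [hU, ← Matrix.star_eq_conjTranspose]; exact hM.spectral_theorem
  set V : Matrix n n ℂ := Uᴴ * S * U with hV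
  have hVV : V * Vᴴ = 1 := by
    calc V * Vᴴ = Uᴴ * (S * (U * Uᴴ) * Sᴴ) * U := by
          simp only [hV, Matrix.conjTranspose_mul, Matrix.conjTranspose_conjTranspose,
            Matrix.mul_assoc]
      _ = 1 := by rw [hUU', Matrix.mul_one, hS2, Matrix.mul_one, hUU]
  have hVentry : ∀ i, ‖V i i‖ ≤ 1 := by
    intro i
    have hrow : ∑ j, Complex.normSq (V i j) = 1 := by
      have h1 : (V * Vᴴ) i i = 1 := by rw [hVV]; simp
      have h2 : (V * Vᴴ) i i = ∑ j, (Complex.normSq (V i j) : ℂ) := by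
        simp [Matrix.mul_apply, Matrix.conjTranspose_apply, Complex.mul_conj]
      rw [h2] at h1
      exact_mod_cast h1
    have hle : Complex.normSq (V i i) ≤ 1 := by
      rw [← hrow]
      exact Finset.single_le_sum (fun j _ => Complex.normSq_nonneg _) (Finset.mem_univ i)
    have := Complex.sq_norm (V i i)
    nlinarith [norm_nonneg (V i i)]
  have htr : (S * M).trace = ∑ i, V i i * ((hM.eigenvalues i : ℝ) : ℂ) := by
    conv_lhs => rw [hM2]
    rw [show S * (U * diagonal (RCLike.ofReal ∘ hM.eigenvalues) * Uᴴ)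
        = S * U * diagonal (RCLike.ofReal ∘ hM.eigenvalues) * Uᴴ by
      simp only [Matrix.mul_assoc]]
    rw [Matrix.trace_mul_comm, ← Matrix.mul_assoc, ← Matrix.mul_assoc]
    rw [show Uᴴ * S * U * diagonal (RCLike.ofReal ∘ hM.eigenvalues)
        = V * diagonal (RCLike.ofReal ∘ hM.eigenvalues) from rfl]
    simp [Matrix.trace, Matrix.diag, Matrix.mul_apply, Matrix.diagonal, Function.comp]
  rw [htr, Complex.re_sum]
  apply Finset.sum_le_sum
  intro i _
  have h1 : (V i i * ((hM.eigenvalues i : ℝ) : ℂ)).re = (V i i).re * hM.eigenvalues i := by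
    simp [Complex.mul_re]
  rw [h1]
  calc (V i i).re * hM.eigenvalues i ≤ |(V i i).re * hM.eigenvalues i| := le_abs_self _
    _ = |(V i i).re| * |hM.eigenvalues i| := abs_mul _ _
    _ ≤ 1 * |hM.eigenvalues i| := by
        apply mul_le_mul_of_nonneg_right _ (abs_nonneg _)
        exact le_trans (Complex.abs_re_le_norm _) (hVentry i)
    _ = |hM.eigenvalues i| := one_mul _

lemma tnorm_add_le {A B : Matrix n n ℂ} (hA : A.IsHermitian) (hB : B.IsHermitian) :
    tnorm (A + B) ≤ tnorm A + tnorm B := by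
  obtain ⟨S, hS1, hS2, hach⟩ := exists_unitary_trace_eq (hA.add hB)
  rw [tnorm_eq_sum_abs_eigenvalues (hA.add hB), ← hach]
  rw [show S * (A + B) = S * A + S * B from Matrix.mul_add S A B,
    Matrix.trace_add, Complex.add_re]
  have h1 := re_trace_le_sum_abs hA S hS2
  have h2 := re_trace_le_sum_abs hB S hS2
  rw [← tnorm_eq_sum_abs_eigenvalues hA] at h1
  rw [← tnorm_eq_sum_abs_eigenvalues hB] at h2
  linarith

lemma traceDist_eq_tnorm (A B : Matrix n n ℂ) :
    traceDist A B = (1 / 2) * tnorm (A - B) := rfl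

lemma traceDist_comm (A B : Matrix n n ℂ) : traceDist A B = traceDist B A := by
  rw [traceDist_eq_tnorm, traceDist_eq_tnorm, ← tnorm_neg (A - B), neg_sub]

lemma traceDist_self (A : Matrix n n ℂ) : traceDist A A = 0 := by
  rw [traceDist_eq_tnorm, sub_self, tnorm_zero, mul_zero]

lemma traceDist_triangle {A B C : Matrix n n ℂ}
    (hAB : (A - B).IsHermitian) (hBC : (B - C).IsHermitian) :
    traceDist A C ≤ traceDist A B + traceDist B C := by
  rw [traceDist_eq_tnorm, traceDist_eq_tnorm, traceDist_eq_tnorm,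
    show A - C = (A - B) + (B - C) from (sub_add_sub_cancel A B C).symm]
  have := tnorm_add_le hAB hBC
  linarith

end QACAux

end AuxLemmas

noncomputable section SysLemmas

namespace QACAux

lemma purge_subset {Agent Cmd : Type} (G : Set Agent) (D : Set Cmd) :
    ∀ (α : List (Agent × Cmd)) (p : Agent × Cmd), p ∈ purge G D α → p ∈ α := by
  intro α
  induction α with
  | nil => intro p hp; simp [purge] at hp
  | cons q rest ih =>
    intro p hp
    rw [purge] at hp
    split_ifs at hp with h
    · exact List.mem_cons_of_mem _ (ih p hp)
    · rcases List.mem_cons.mp hp with h' | h'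
      · exact h' ▸ List.mem_cons_self
      · exact List.mem_cons_of_mem _ (ih p h')

lemma valid_purge {Agent Cmd d : Type} (S : QSystem Agent Cmd d)
    (G : Set Agent) (D : Set Cmd) {α : List (Agent × Cmd)} (h : S.Valid α) :
    S.Valid (purge G D α) :=
  fun p hp => h p (purge_subset G D α p hp)

lemma run_cons {Agent Cmd d : Type} (S : QSystem Agent Cmd d)
    (p : Agent × Cmd) (α : List (Agent × Cmd)) (ρ : Matrix d d ℂ) :
    S.run (p :: α) ρ = S.run α (S.Ecmd p.1 p.2 ρ) := rfl

lemma reachable_step {Agent Cmd d : Type} {S : QSystem Agent Cmd d}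
    {ρ : Matrix d d ℂ} (hρ : S.Reachable ρ) {p : Agent × Cmd}
    (h1 : p.1 ∈ S.A) (h2 : p.2 ∈ S.C) : S.Reachable (S.Ecmd p.1 p.2 ρ) := by
  obtain ⟨β, hβ, rfl⟩ := hρ
  refine ⟨β ++ [p], ?_, ?_⟩
  · intro q hq
    rcases List.mem_append.mp hq with h | h
    · exact hβ q h
    · simp only [List.mem_singleton] at h
      subst h; exact ⟨h1, h2⟩
  · rw [QSystem.run, List.foldl_append]; rfl

lemma run_posSemidef {Agent Cmd d : Type} [Fintype d] [DecidableEq d]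
    {S : QSystem Agent Cmd d} (hS : S.WellFormed) :
    ∀ (α : List (Agent × Cmd)), S.Valid α → ∀ ρ : Matrix d d ℂ, ρ.PosSemidef →
      (S.run α ρ).PosSemidef := by
  intro α
  induction α with
  | nil => intro _ ρ hρ; exact hρ
  | cons p rest ih =>
    intro hval ρ hρ
    have hp := hval p (List.mem_cons_self)
    rw [run_cons]
    exact ih (fun q hq => hval q (List.mem_cons_of_mem _ hq)) _
      ((hS.2.1 p.1 hp.1 p.2 hp.2).2.1 ρ hρ)

lemma reachable_posSemidef {Agent Cmd d : Type} [Fintype d] [DecidableEq d]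
    {S : QSystem Agent Cmd d} (hS : S.WellFormed) {ρ : Matrix d d ℂ}
    (h : S.Reachable ρ) : ρ.PosSemidef := by
  obtain ⟨α, hα, rfl⟩ := h
  exact run_posSemidef hS α hα S.ρ0 hS.1.1

lemma ptrOut_isHermitian {N : Type} [Fintype N] [DecidableEq N] {ι : N → Type}
    [∀ n, Fintype (ι n)] [∀ n, DecidableEq (ι n)] (K : Finset N)
    {ρ : Matrix ((n : N) → ι n) ((n : N) → ι n) ℂ} (hρ : ρ.IsHermitian) :
    (ptrOut K ρ).IsHermitian := by
  ext u v
  simp only [Matrix.conjTranspose_apply, ptrOut, Matrix.of_apply, star_sum]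
  exact Finset.sum_congr rfl fun w _ => by
    rw [← Matrix.conjTranspose_apply, hρ.eq]

end QACAux

end SysLemmas

noncomputable section

open QACAux in
/-- Key induction: the purged and unpurged runs stay `2|α|ε`-close on every
window readable by `a`. -/
lemma key_induction {Agent Cmd N : Type} [Fintype N] [DecidableEq N]
    {ι : N → Type} [∀ n, Fintype (ι n)] [∀ n, DecidableEq (ι n)]
    (S : QSystem Agent Cmd ((n : N) → ι n)) (hS : S.WellFormed)
    (pol : Agent → Agent → Prop)
    (read alter : Agent → Set (Finset N))
    (hacm : ACMSatisfies S.A pol read alter)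
    (ε : ℝ) (hε : 0 ≤ ε) {a : Agent} (ha : a ∈ S.A)
    (RM2 : ∀ b ∈ S.A, ∀ c ∈ S.C, ∀ ρ σ, S.Reachable ρ → S.Reachable σ →
      ∀ K : Finset N,
        (Dis K ε ρ (S.Ecmd b c ρ) ∨ Dis K ε σ (S.Ecmd b c σ)) →
        ¬ Dis K (deltaRead read b ρ σ) (S.Ecmd b c ρ) (S.Ecmd b c σ))
    (RM3 : ∀ b ∈ S.A, ∀ c ∈ S.C, ∀ ρ, S.Reachable ρ → ∀ K : Finset N,
      Dis K ε ρ (S.Ecmd b c ρ) → ∃ L ∈ alter b, (K ∩ L).Nonempty) :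
    ∀ α : List (Agent × Cmd), S.Valid α → ∀ ρ σ, S.Reachable ρ → S.Reachable σ →
    ∀ D : ℝ, 0 ≤ D → (∀ K ∈ read a, traceDist (ptrOut K ρ) (ptrOut K σ) ≤ D) →
    ∀ K ∈ read a, traceDist (ptrOut K (S.run α ρ))
      (ptrOut K (S.run (purge (nabla pol a) Set.univ α) σ))
      ≤ D + 2 * α.length * ε := by
  intro α
  induction α with
  | nil =>
    intro _ ρ σ _ _ D _ hinv K hK
    simpa [purge, QSystem.run] using hinv K hK
  | cons p rest ih =>
    intro hval ρ σ hρ hσ D hD hinv K hK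
    have hp := hval p (List.mem_cons_self)
    have hval' : S.Valid rest := fun q hq => hval q (List.mem_cons_of_mem _ hq)
    have hρ' : S.Reachable (S.Ecmd p.1 p.2 ρ) := reachable_step hρ hp.1 hp.2
    -- Hermitian-ness of partial traces of all relevant states
    have herm : ∀ τ, S.Reachable τ → ∀ K' : Finset N, (ptrOut K' τ).IsHermitian :=
      fun τ hτ K' => ptrOut_isHermitian K' (reachable_posSemidef hS hτ).1
    have hlen : ((p :: rest).length : ℝ) = rest.length + 1 := by
      push_cast [List.length_cons]; ring
    by_cases hb : pol p.1 a
    · -- action kept by purge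
      have hpurge : purge (nabla pol a) Set.univ (p :: rest)
          = p :: purge (nabla pol a) Set.univ rest := by
        rw [purge, if_neg]
        rintro ⟨h1, -⟩
        exact h1 hb
      rw [hpurge, run_cons, run_cons]
      have hσ' : S.Reachable (S.Ecmd p.1 p.2 σ) := reachable_step hσ hp.1 hp.2
      have hinv' : ∀ K' ∈ read a,
          traceDist (ptrOut K' (S.Ecmd p.1 p.2 ρ)) (ptrOut K' (S.Ecmd p.1 p.2 σ))
            ≤ D + 2 * ε := by
        intro K' hK'
        by_cases hdis : Dis K' ε ρ (S.Ecmd p.1 p.2 ρ) ∨ Dis K' ε σ (S.Ecmd p.1 p.2 σ)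
        · have h2 := RM2 p.1 hp.1 p.2 hp.2 ρ σ hρ hσ K' hdis
          rw [Dis, not_lt] at h2
          have hsub : read p.1 ⊆ read a := hacm.1 p.1 hp.1 a ha hb
          have hdel : deltaRead read p.1 ρ σ ≤ D := by
            apply Real.sSup_le _ hD
            rintro x ⟨K'', hK'', rfl⟩
            exact hinv K'' (hsub hK'')
          linarith
        · push_neg at hdis
          rw [Dis, not_lt] at hdis
          obtain ⟨hd1, hd2⟩ := hdis
          rw [Dis, not_lt] at hd2
          have ht1 : traceDist (ptrOut K' (S.Ecmd p.1 p.2 ρ)) (ptrOut K' σ)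
              ≤ traceDist (ptrOut K' (S.Ecmd p.1 p.2 ρ)) (ptrOut K' ρ)
                + traceDist (ptrOut K' ρ) (ptrOut K' σ) :=
            traceDist_triangle ((herm _ hρ' K').sub (herm _ hρ K'))
              ((herm _ hρ K').sub (herm _ hσ K'))
          have ht2 : traceDist (ptrOut K' (S.Ecmd p.1 p.2 ρ)) (ptrOut K' (S.Ecmd p.1 p.2 σ))
              ≤ traceDist (ptrOut K' (S.Ecmd p.1 p.2 ρ)) (ptrOut K' σ)
                + traceDist (ptrOut K' σ) (ptrOut K' (S.Ecmd p.1 p.2 σ)) :=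
            traceDist_triangle ((herm _ hρ' K').sub (herm _ hσ K'))
              ((herm _ hσ K').sub (herm _ hσ' K'))
          have hc : traceDist (ptrOut K' (S.Ecmd p.1 p.2 ρ)) (ptrOut K' ρ)
              = traceDist (ptrOut K' ρ) (ptrOut K' (S.Ecmd p.1 p.2 ρ)) :=
            traceDist_comm _ _
          have hiv := hinv K' hK'
          rw [hc] at ht1
          linarith
      have := ih hval' (S.Ecmd p.1 p.2 ρ) (S.Ecmd p.1 p.2 σ) hρ' hσ'
        (D + 2 * ε) (by linarith) hinv' K hK
      rw [hlen]
      linarith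
    · -- action dropped by purge
      have hb' : p.1 ∈ nabla pol a := hb
      have hpurge : purge (nabla pol a) Set.univ (p :: rest)
          = purge (nabla pol a) Set.univ rest := by
        rw [purge, if_pos ⟨hb', Set.mem_univ _⟩]
      rw [hpurge, run_cons]
      have hinv' : ∀ K' ∈ read a,
          traceDist (ptrOut K' (S.Ecmd p.1 p.2 ρ)) (ptrOut K' σ) ≤ D + 2 * ε := by
        intro K' hK'
        have hstep : traceDist (ptrOut K' ρ) (ptrOut K' (S.Ecmd p.1 p.2 ρ)) ≤ ε := by
          by_contra hcon
          rw [not_le] at hcon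
          obtain ⟨L, hL, hne⟩ := RM3 p.1 hp.1 p.2 hp.2 ρ hρ K' hcon
          obtain ⟨x, hx⟩ := hne
          have hx' := Finset.mem_inter.mp hx
          apply hb
          apply hacm.2 a ha p.1 hp.1
          refine ⟨K', hK', L, hL, ⟨x, ?_⟩⟩
          simp only [Finset.mem_inter]
          exact hx'
        have ht1 : traceDist (ptrOut K' (S.Ecmd p.1 p.2 ρ)) (ptrOut K' σ)
            ≤ traceDist (ptrOut K' (S.Ecmd p.1 p.2 ρ)) (ptrOut K' ρ)
              + traceDist (ptrOut K' ρ) (ptrOut K' σ) :=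
          traceDist_triangle ((herm _ hρ' K').sub (herm _ hρ K'))
            ((herm _ hρ K').sub (herm _ hσ K'))
        have hc : traceDist (ptrOut K' (S.Ecmd p.1 p.2 ρ)) (ptrOut K' ρ)
            = traceDist (ptrOut K' ρ) (ptrOut K' (S.Ecmd p.1 p.2 ρ)) :=
          traceDist_comm _ _
        have hiv := hinv K' hK'
        rw [hc] at ht1
        linarith
      have := ih hval' (S.Ecmd p.1 p.2 ρ) σ hρ' hσ (D + 2 * ε) (by linarith) hinv' K hK
      rw [hlen]
      linarith

/-- **Security of quantum access control.** If the access control matrix satisfies the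
policy and the Reference Monitor Assumptions (RM1)–(RM3) hold, then
`K_t(𝕊,↝) ≤ θ + 2tε`. -/
theorem access_control_security {Agent Cmd N : Type} [Fintype N] [DecidableEq N]
    {ι : N → Type} [∀ n, Fintype (ι n)] [∀ n, DecidableEq (ι n)]
    [∀ n, Nonempty (ι n)]
    (S : QSystem Agent Cmd ((n : N) → ι n)) (hS : S.WellFormed)
    (pol : Agent → Agent → Prop) (hpol : ∀ a ∈ S.A, pol a a)
    (read alter : Agent → Set (Finset N))
    (hread : ∀ a ∈ S.A, BelowClosed (read a))
    (halter : ∀ a ∈ S.A, BelowClosed (alter a))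
    (hacm : ACMSatisfies S.A pol read alter)
    (θ ε : ℝ) (hθ : 0 ≤ θ) (hε : 0 ≤ ε) (t : ℕ)
    (RM1 : ∀ a ∈ S.A, ∀ ρ σ, S.Reachable ρ → S.Reachable σ →
      dM (S.M a) ρ σ ≤ deltaRead read a ρ σ + θ)
    (RM2 : ∀ a ∈ S.A, ∀ c ∈ S.C, ∀ ρ σ, S.Reachable ρ → S.Reachable σ →
      ∀ K : Finset N,
        (Dis K ε ρ (S.Ecmd a c ρ) ∨ Dis K ε σ (S.Ecmd a c σ)) →
        ¬ Dis K (deltaRead read a ρ σ) (S.Ecmd a c ρ) (S.Ecmd a c σ))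
    (RM3 : ∀ a ∈ S.A, ∀ c ∈ S.C, ∀ ρ, S.Reachable ρ → ∀ K : Finset N,
      Dis K ε ρ (S.Ecmd a c ρ) → ∃ L ∈ alter a, (K ∩ L).Nonempty) :
    Kt S pol t ≤ θ + 2 * t * ε := by
  have htε : (0:ℝ) ≤ 2 * t * ε := by positivity
  apply Real.sSup_le _ (by linarith)
  rintro x ⟨a, ha, α, hval, hlen, rfl⟩
  have hreach1 : S.Reachable (S.run α S.ρ0) := ⟨α, hval, rfl⟩
  have hreach2 : S.Reachable (S.run (purge (nabla pol a) Set.univ α) S.ρ0) :=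
    ⟨purge (nabla pol a) Set.univ α, QACAux.valid_purge S _ _ hval, rfl⟩
  have h1 := RM1 a ha _ _ hreach1 hreach2
  have hρ0 : S.Reachable S.ρ0 := ⟨[], fun p hp => by simp at hp, rfl⟩
  have hkey := key_induction S hS pol read alter hacm ε hε ha RM2 RM3 α hval
    S.ρ0 S.ρ0 hρ0 hρ0 0 le_rfl
    (fun K _ => le_of_eq (QACAux.traceDist_self _))
  have h2 : deltaRead read a (S.run α S.ρ0)
      (S.run (purge (nabla pol a) Set.univ α) S.ρ0) ≤ 2 * α.length * ε := by
    apply Real.sSup_le _ (by positivity)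
    rintro x ⟨K, hK, rfl⟩
    have := hkey K hK
    linarith
  have h3 : 2 * (α.length : ℝ) * ε ≤ 2 * t * ε := by
    have : (α.length : ℝ) ≤ t := by exact_mod_cast hlen
    nlinarith
  linarith

end
end
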